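/- Let E be a finite-dimensional real inner product space, let f : E → ℝ be twice continuously differentiable, and let x̂ ∈ E satisfy ∇f(x̂) = 0 and f''(x̂)(y, y) > 0 for all y ≠ 0 (x̂ is a local minimum at which f is strongly convex). Then there exist r > 0, C ≥ 0 and θ ∈ (0, 1) such that for every x₀ with ‖x₀ − x̂‖ < r, the gradient descent sequence with Newton step size, defined by x_{k+1} = x_k − (‖∇f(x_k)‖² / f''(x_k)(∇f(x_k), ∇f(x_k))) ∇f(x_k) when ∇f(x_k) ≠ 0 and x_{k+1} = x_k otherwise, is well defined (in particular f''(x_k)(∇f(x_k), ∇f(x_k)) > 0 whenever ∇f(x_k) ≠ 0), remains in the ball of radius r around x̂, and satisfies ‖x_k − x̂‖ ≤ C θ^k ‖x₀ − x̂‖ for all k; in particular x_k → x̂. -/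

import Mathlib

open scoped Classical

set_option maxHeartbeats 1000000

open InnerProductSpace

local notation "⟪" x ", " y "⟫" => @inner ℝ _ _ x y


lemma cs_bilin {E : Type*} [NormedAddCommGroup E] [InnerProductSpace ℝ E]
    (B : E →L[ℝ] E →L[ℝ] ℝ) (hsymm : ∀ u v, B u v = B v u)
    (hnn : ∀ u, 0 ≤ B u u) (u v : E) : (B u v) ^ 2 ≤ B u u * B v v := by
  have expand : ∀ (a b : ℝ) (u v : E),
      B (a • u + b • v) (a • u + b • v)
        = a^2 * B u u + 2*a*b * B u v + b^2 * B v v := by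
    intro a b u v
    simp only [map_add, map_smul, ContinuousLinearMap.add_apply,
      ContinuousLinearMap.coe_smul', Pi.smul_apply, smul_eq_mul]
    rw [hsymm v u]; ring
  rcases eq_or_lt_of_le (hnn v) with hv | hv
  · -- B v v = 0, show B u v = 0
    have key : ∀ t : ℝ, 0 ≤ B u u + 2 * t * B u v := by
      intro t
      have := hnn ((1:ℝ) • u + t • v)
      rw [expand 1 t u v, ← hv] at this
      nlinarith [this]
    by_contra h
    have huv : B u v ≠ 0 := by
      intro h0; apply h; rw [← hv]; nlinarith [h0]
    have h2 := key (-(B u u + 1) / (2 * B u v))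
    have h3 : 2 * (-(B u u + 1) / (2 * B u v)) * B u v = -(B u u + 1) := by
      field_simp
    rw [h3] at h2
    linarith
  · have h0 := hnn ((B v v) • u + (-(B u v)) • v)
    rw [expand] at h0
    nlinarith [h0]


lemma step_arith (m M δ s h a b c Q ieg t : ℝ)
    (hm : 0 < m) (hmM : m ≤ M)
    (hδ : δ = m^2/(4*m+16*M))
    (hs : 0 < s) (hh : 0 < h)
    (h1 : a - δ*s^2 ≤ ieg)
    (h2 : h^2 ≤ b + δ*s*h)
    (h3 : |Q - c| ≤ δ*h^2)
    (h4a : m*h^2 ≤ c) (h4b : c ≤ M*h^2)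
    (h5a : m*s^2 ≤ a) (h5b : a ≤ M*s^2)
    (h6 : b ≤ M*s*h)
    (h7 : b^2 ≤ a*c)
    (hQ : 0 < Q)
    (ht : t = h^2/Q) :
    s^2 - 2*t*ieg + t^2*h^2 ≤ (1 - m/(4*M)) * s^2 := by
  have hM : 0 < M := lt_of_lt_of_le hm hmM
  have hden : 0 < 4*m + 16*M := by linarith
  have hδpos : 0 < δ := by rw [hδ]; positivity
  have hδ4 : δ ≤ m/4 := by
    rw [hδ, div_le_div_iff₀ hden (by norm_num)]
    nlinarith
  have hδM : δ ≤ M := by linarith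
  have h3a : Q - c ≤ δ*h^2 := (abs_le.mp h3).2
  have h3b : c - Q ≤ δ*h^2 := by have := (abs_le.mp h3).1; linarith
  set K := 8*M/m with hK
  have hKpos : 0 < K := by positivity
  have hKδ : K*δ ≤ 2*M := by
    rw [hK, div_mul_eq_mul_div, div_le_iff₀ hm]
    nlinarith
  have hKm : K*m = 8*M := by rw [hK]; field_simp
  have hsh : (0:ℝ) ≤ δ*s*h := by positivity
  have stepA : h^4 ≤ a*c + 3*δ*M*s^2*h^2 := by
    have hsq : h^2*h^2 ≤ (b+δ*s*h)*(b+δ*s*h) :=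
      mul_self_le_mul_self (sq_nonneg h) h2
    have p1 : b*(δ*s*h) ≤ (M*s*h)*(δ*s*h) := mul_le_mul_of_nonneg_right h6 hsh
    have p2 : (δ*s*h)*(δ*s*h) ≤ δ*M*(s^2*h^2) := by nlinarith [sq_nonneg (s*h)]
    have hexp : (b+δ*s*h)*(b+δ*s*h) = b^2 + 2*(b*(δ*s*h)) + (δ*s*h)*(δ*s*h) := by ring
    linarith [hsq, hexp, h7, p1, p2]
  have haK : 0 ≤ a + K*δ*s^2 := by
    have q0 : (0:ℝ) ≤ K*δ*s^2 := by positivity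
    nlinarith [mul_nonneg hm.le (sq_nonneg s)]
  have key : a*c + 3*δ*M*s^2*h^2 ≤ (a + K*δ*s^2)*(c - δ*h^2) := by
    have q1 : a*(δ*h^2) ≤ (M*s^2)*(δ*h^2) :=
      mul_le_mul_of_nonneg_right h5b (by positivity)
    have q2 : (K*δ)*(δ*s^2*h^2) ≤ (2*M)*(δ*s^2*h^2) :=
      mul_le_mul_of_nonneg_right hKδ (by positivity)
    have q3 : (K*δ*s^2)*(m*h^2) ≤ (K*δ*s^2)*c :=
      mul_le_mul_of_nonneg_left h4a (by positivity)
    have q4 : (K*δ*s^2)*(m*h^2) = 8*M*(δ*s^2*h^2) := by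
      have : K*δ*s^2*(m*h^2) = (K*m)*(δ*s^2*h^2) := by ring
      rw [this, hKm]
    have hexp2 : (a + K*δ*s^2)*(c - δ*h^2)
        = a*c - a*(δ*h^2) + (K*δ*s^2)*c - (K*δ)*(δ*s^2*h^2) := by ring
    nlinarith [q1, q2, q3, q4]
  have stepB : h^4 ≤ (a + K*δ*s^2)*Q := by
    have hQc : c - δ*h^2 ≤ Q := by linarith
    have := mul_le_mul_of_nonneg_left hQc haK
    linarith [stepA, key]
  have htpos : 0 < t := by rw [ht]; positivity
  have stepB' : t*h^2 ≤ a + K*δ*s^2 := by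
    rw [ht, div_mul_eq_mul_div, div_le_iff₀ hQ]
    calc h^2*h^2 = h^4 := by ring
      _ ≤ (a + K*δ*s^2)*Q := stepB
  have hδ2K : δ*(2+K) = m/2 := by
    rw [hδ, hK]
    field_simp
    ring
  have stepD : 1/(2*M) ≤ t := by
    have r1 : δ*h^2 ≤ (m/4)*h^2 := mul_le_mul_of_nonneg_right hδ4 (sq_nonneg h)
    have r2 : m*h^2 ≤ M*h^2 := mul_le_mul_of_nonneg_right hmM (sq_nonneg h)
    have hQle : Q ≤ 2*M*h^2 := by linarith
    rw [ht, le_div_iff₀ hQ]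
    calc 1/(2*M)*Q ≤ 1/(2*M)*(2*M*h^2) := by
          apply mul_le_mul_of_nonneg_left hQle (by positivity)
      _ = h^2 := by field_simp
  have hD : -(2*t*ieg) + t^2*h^2 ≤ -(t*(m/2)*s^2) := by
    have e1 : t^2*h^2 = t*(t*h^2) := by ring
    have e2 : t*(t*h^2) ≤ t*(a + K*δ*s^2) := mul_le_mul_of_nonneg_left stepB' htpos.le
    have e3 : 2*t*(a - δ*s^2) ≤ 2*t*ieg := by
      apply mul_le_mul_of_nonneg_left h1 (by positivity)
    have e4 : -(2*t*(a - δ*s^2)) + t*(a + K*δ*s^2) = -(t*a) + t*(δ*(2+K))*s^2 := by ring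
    have e5 : t*(δ*(2+K))*s^2 = t*(m/2)*s^2 := by rw [hδ2K]
    have e6 : t*(m*s^2) ≤ t*a := mul_le_mul_of_nonneg_left h5a htpos.le
    linarith [e2, e3, e6]
  have final : (m/(4*M))*s^2 ≤ t*(m/2)*s^2 := by
    have r1 : (1/(2*M))*(m/2) ≤ t*(m/2) := mul_le_mul_of_nonneg_right stepD (by positivity)
    have r2 : (1/(2*M))*(m/2) = m/(4*M) := by
      rw [div_mul_div_comm, one_mul]; ring_nf
    have := mul_le_mul_of_nonneg_right r1 (sq_nonneg s)
    rw [r2] at this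
    linarith
  linarith [hD, final]


lemma posdef_bound {E : Type*} [NormedAddCommGroup E] [InnerProductSpace ℝ E]
    [FiniteDimensional ℝ E] [Nontrivial E]
    (B : E →L[ℝ] E →L[ℝ] ℝ) (hpos : ∀ y : E, y ≠ 0 → 0 < B y y) :
    ∃ m > (0:ℝ), ∀ u : E, m * ‖u‖^2 ≤ B u u := by
  have hsph : (Metric.sphere (0:E) 1).Nonempty :=
    NormedSpace.sphere_nonempty.mpr zero_le_one
  have hcont : ContinuousOn (fun u : E => B u u) (Metric.sphere 0 1) :=
    (B.continuous₂.comp (continuous_id.prodMk continuous_id)).continuousOn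
  obtain ⟨u0, hu0mem, hu0min⟩ :=
    (isCompact_sphere (0:E) 1).exists_isMinOn hsph hcont
  set m := B u0 u0 with hm
  have hu0 : ‖u0‖ = 1 := by simpa using hu0mem
  have hu0ne : u0 ≠ 0 := by intro h; rw [h] at hu0; simp at hu0
  refine ⟨m, hpos u0 hu0ne, fun u => ?_⟩
  rcases eq_or_ne u 0 with rfl | hu
  · simp
  · have hnu : (0:ℝ) < ‖u‖ := norm_pos_iff.mpr hu
    have hmem : (‖u‖⁻¹ • u) ∈ Metric.sphere (0:E) 1 := by
      simp [norm_smul, abs_of_pos (inv_pos.mpr hnu), inv_mul_cancel₀ hnu.ne']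
    have hle : m ≤ B (‖u‖⁻¹ • u) (‖u‖⁻¹ • u) := hu0min hmem
    have hexp : B (‖u‖⁻¹ • u) (‖u‖⁻¹ • u) = ‖u‖⁻¹ * ‖u‖⁻¹ * B u u := by
      simp [map_smul, ContinuousLinearMap.smul_apply]; ring
    rw [hexp] at hle
    have h2 : m * (‖u‖ * ‖u‖) ≤ B u u := by
      rw [← sub_nonneg] at hle ⊢
      have := mul_nonneg (le_of_lt (mul_pos hnu hnu)) hle
      calc (0:ℝ) ≤ ‖u‖ * ‖u‖ * (‖u‖⁻¹ * ‖u‖⁻¹ * B u u - m) := this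
        _ = B u u - m * (‖u‖ * ‖u‖) := by field_simp
    calc m * ‖u‖^2 = m * (‖u‖*‖u‖) := by ring
      _ ≤ B u u := h2

lemma step_main {E : Type*} [NormedAddCommGroup E] [InnerProductSpace ℝ E]
    (m M δ : ℝ) (hm : 0 < m) (hmM : m ≤ M) (hδ : δ = m^2/(4*m+16*M))
    (B H : E →L[ℝ] E →L[ℝ] ℝ)
    (hBsymm : ∀ u v, B u v = B v u)
    (hBlow : ∀ u, m*‖u‖^2 ≤ B u u)
    (hBup : ∀ u v, |B u v| ≤ M*‖u‖*‖v‖)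
    (hH : ∀ u : E, |H u u - B u u| ≤ δ*‖u‖^2)
    (e g w : E)
    (hw : ∀ v, ⟪w, v⟫ = B e v)
    (hge : ‖g - w‖ ≤ δ*‖e‖)
    (he : e ≠ 0) :
    g ≠ 0 ∧ 0 < H g g ∧
      ‖e - (‖g‖^2 / H g g) • g‖^2 ≤ (1 - m/(4*M))*‖e‖^2 := by
  have hM : 0 < M := lt_of_lt_of_le hm hmM
  have hδpos : 0 < δ := by rw [hδ]; positivity
  have hδ4 : δ ≤ m/4 := by
    rw [hδ, div_le_div_iff₀ (by linarith) (by norm_num)]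
    nlinarith
  set s := ‖e‖ with hs
  set h := ‖g‖ with hh
  have hspos : 0 < s := norm_pos_iff.mpr he
  set a := B e e with ha
  set b := B e g with hb
  set c := B g g with hc
  have h5a : m*s^2 ≤ a := hBlow e
  have h5b : a ≤ M*s^2 := by
    have := (abs_le.mp (hBup e e)).2
    calc a ≤ M*s*s := this
      _ = M*s^2 := by ring
  -- inner product estimates
  have h1 : a - δ*s^2 ≤ ⟪e, g⟫ := by
    have e1 : ⟪e, g⟫ = ⟪e, w⟫ + ⟪e, g - w⟫ := by
      rw [← inner_add_right]; norm_num
    have e2 : ⟪e, w⟫ = a := by rw [real_inner_comm, hw e]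
    have e3 : |⟪e, g - w⟫| ≤ s * (δ*s) := by
      calc |⟪e, g - w⟫| ≤ ‖e‖ * ‖g - w‖ := abs_real_inner_le_norm e (g-w)
        _ ≤ s * (δ*s) := by
            apply mul_le_mul_of_nonneg_left hge (norm_nonneg e)
    have := (abs_le.mp e3).1
    nlinarith [this]
  have hieg : (3*m/4)*s^2 ≤ ⟪e, g⟫ := by nlinarith [h1, h5a, sq_nonneg s]
  have hhpos : 0 < h := by
    rcases eq_or_lt_of_le (norm_nonneg g) with h0 | h0
    · exfalso
      have hz : h = 0 := h0.symm
      have h1' : ⟪e, g⟫ ≤ s * h := real_inner_le_norm e g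
      rw [hz, mul_zero] at h1'
      nlinarith [hieg, mul_pos (mul_pos hm hspos) hspos]
    · exact h0
  have hg0 : g ≠ 0 := norm_pos_iff.mp hhpos
  have h2 : h^2 ≤ b + δ*s*h := by
    have e1 : ⟪g, g⟫ = ⟪w, g⟫ + ⟪g - w, g⟫ := by
      rw [← inner_add_left]; norm_num
    have e2 : ⟪w, g⟫ = b := hw g
    have e3 : |⟪g - w, g⟫| ≤ (δ*s) * h := by
      calc |⟪g - w, g⟫| ≤ ‖g - w‖ * ‖g‖ := abs_real_inner_le_norm _ _
        _ ≤ (δ*s) * h := by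
            apply mul_le_mul_of_nonneg_right hge (norm_nonneg g)
    have e4 : ⟪g, g⟫ = h^2 := real_inner_self_eq_norm_sq g
    have := (abs_le.mp e3).2
    nlinarith [this]
  have h3 : |H g g - c| ≤ δ*h^2 := hH g
  have h4a : m*h^2 ≤ c := hBlow g
  have h4b : c ≤ M*h^2 := by
    have := (abs_le.mp (hBup g g)).2
    calc c ≤ M*h*h := this
      _ = M*h^2 := by ring
  have h6 : b ≤ M*s*h := (abs_le.mp (hBup e g)).2
  have h7 : b^2 ≤ a*c := by
    apply cs_bilin B hBsymm (fun u => le_trans (by positivity) (hBlow u))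
  have hQ : 0 < H g g := by
    have := (abs_le.mp h3).1
    nlinarith [h4a, mul_pos (mul_pos hm hhpos) hhpos, sq_nonneg h]
  refine ⟨hg0, hQ, ?_⟩
  set t := h^2 / H g g with ht
  have expand : ‖e - t • g‖^2 = s^2 - 2*t*⟪e, g⟫ + t^2*h^2 := by
    rw [norm_sub_sq_real, real_inner_smul_right, norm_smul]
    have : ‖t‖^2 = t^2 := sq_abs t
    rw [mul_pow, Real.norm_eq_abs, sq_abs]
    ring
  rw [expand]
  exact step_arith m M δ s h a b c (H g g) ⟪e, g⟫ t hm hmM hδ hspos hhpos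
    h1 h2 h3 h4a h4b h5a h5b h6 h7 hQ ht

theorem stmt3 {E : Type*}
    [NormedAddCommGroup E] [InnerProductSpace ℝ E] [FiniteDimensional ℝ E]
    (f : E → ℝ) (hf : ContDiff ℝ 2 f) (xhat : E)
    (hgrad : gradient f xhat = 0)
    (hpos : ∀ y : E, y ≠ 0 → 0 < fderiv ℝ (fderiv ℝ f) xhat y y) :
    ∃ r > (0 : ℝ), ∃ C ≥ (0 : ℝ), ∃ θ : ℝ, 0 < θ ∧ θ < 1 ∧
      ∀ x₀ : E, ‖x₀ - xhat‖ < r →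
        ∀ x : ℕ → E, x 0 = x₀ →
          (∀ k : ℕ, x (k + 1) =
            if gradient f (x k) = 0 then x k
            else x k - (‖gradient f (x k)‖ ^ 2 /
              fderiv ℝ (fderiv ℝ f) (x k) (gradient f (x k)) (gradient f (x k))) •
                gradient f (x k)) →
          ((∀ k : ℕ, gradient f (x k) ≠ 0 →
              0 < fderiv ℝ (fderiv ℝ f) (x k) (gradient f (x k)) (gradient f (x k))) ∧
           (∀ k : ℕ, ‖x k - xhat‖ < r) ∧
           (∀ k : ℕ, ‖x k - xhat‖ ≤ C * θ ^ k * ‖x₀ - xhat‖) ∧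
           Filter.Tendsto x Filter.atTop (nhds xhat)) := by
  rcases subsingleton_or_nontrivial E with hE | hE
  · refine ⟨1, one_pos, 1, zero_le_one, 1/2, by norm_num, by norm_num, ?_⟩
    intro x₀ hx₀ x hx0 hrec
    have hxk : ∀ k, x k - xhat = 0 := fun k => Subsingleton.elim _ _
    refine ⟨fun k hk => absurd (Subsingleton.elim _ _) hk, ?_, ?_, ?_⟩
    · intro k; rw [hxk k]; simpa using one_pos
    · intro k; rw [hxk k, norm_zero]; positivity
    · have hxx : x = fun _ => xhat := funext fun k => Subsingleton.elim _ _
      rw [hxx]; exact tendsto_const_nhds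
  -- main case
  have hC1 : ContDiff ℝ 1 (fderiv ℝ f) := hf.fderiv_right (by norm_num)
  have hF2cont : Continuous (fderiv ℝ (fderiv ℝ f)) :=
    (hC1.fderiv_right (m := 0) (by norm_num)).continuous
  set F2 := fderiv ℝ (fderiv ℝ f) with hF2def
  set B := F2 xhat with hBdef
  have hBsymm : ∀ u v, B u v = B v u := fun u v =>
    (hf.contDiffAt.isSymmSndFDerivAt (by norm_num)) u v
  obtain ⟨m, hm, hBlow⟩ := posdef_bound B hpos
  set M := max ‖B‖ m with hMdef
  have hmM : m ≤ M := le_max_right _ _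
  have hM : 0 < M := lt_of_lt_of_le hm hmM
  have hBup : ∀ u v : E, |B u v| ≤ M * ‖u‖ * ‖v‖ := by
    intro u v
    calc |B u v| = ‖B u v‖ := (Real.norm_eq_abs _).symm
      _ ≤ ‖B‖ * ‖u‖ * ‖v‖ := B.le_opNorm₂ u v
      _ ≤ M * ‖u‖ * ‖v‖ := by
          apply mul_le_mul_of_nonneg_right
            (mul_le_mul_of_nonneg_right (le_max_left _ _) (norm_nonneg u)) (norm_nonneg v)
  set δ := m^2/(4*m+16*M) with hδdef
  have hδpos : 0 < δ := div_pos (by positivity) (by linarith)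
  -- radius from continuity of the second derivative
  obtain ⟨r, hr, hball⟩ : ∃ r > 0, ∀ y, y ∈ Metric.ball xhat r → ‖F2 y - B‖ ≤ δ := by
    obtain ⟨r, hr, h⟩ := (Metric.continuousAt_iff (f := F2) (a := xhat)).mp (by exact hF2cont.continuousAt) δ hδpos
    refine ⟨r, hr, fun y hy => ?_⟩
    have := h (show dist y xhat < r from hy)
    exact (dist_eq_norm (F2 y) (F2 xhat)).symm.le.trans (by exact this.le)
  -- gradient and its derivative
  set J := (toDual ℝ E).symm with hJdef
  set Jc := (J : (E →L[ℝ] ℝ) ≃ₗᵢ[ℝ] E).toContinuousLinearMap with hJcdef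
  have hgd : Differentiable ℝ (gradient f) := by
    have hgg : gradient f = ⇑J ∘ (fderiv ℝ f) := rfl
    rw [hgg]; exact J.differentiable.comp (hC1.differentiable one_ne_zero)
  have hgderiv : ∀ y, fderiv ℝ (gradient f) y = Jc.comp (F2 y) := by
    intro y
    have hgg : gradient f = ⇑J ∘ (fderiv ℝ f) := rfl
    rw [hgg, LinearIsometryEquiv.comp_fderiv]
    rfl
  -- mean value estimate
  have hmvt : ∀ y ∈ Metric.ball xhat r,
      ‖gradient f y - Jc (B (y - xhat))‖ ≤ δ * ‖y - xhat‖ := by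
    intro y hy
    set φ := fun z => gradient f z - (Jc.comp B) z with hφdef
    have hφd : ∀ z, DifferentiableAt ℝ φ z := fun z =>
      (hgd z).sub ((Jc.comp B).differentiableAt)
    have hφderiv : ∀ z, fderiv ℝ φ z = Jc.comp (F2 z - B) := by
      intro z
      rw [hφdef]
      rw [fderiv_fun_sub (hgd z) ((Jc.comp B).differentiableAt),
        (Jc.comp B).fderiv, hgderiv z, ContinuousLinearMap.comp_sub]
    have bound : ∀ z ∈ Metric.ball xhat r, ‖fderiv ℝ φ z‖ ≤ δ := by
      intro z hz
      rw [hφderiv z]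
      apply ContinuousLinearMap.opNorm_le_bound _ hδpos.le
      intro u
      have : ‖(Jc.comp (F2 z - B)) u‖ = ‖(F2 z - B) u‖ := J.norm_map ((F2 z - B) u)
      rw [this]
      calc ‖(F2 z - B) u‖ ≤ ‖F2 z - B‖ * ‖u‖ := (F2 z - B).le_opNorm u
        _ ≤ δ * ‖u‖ := mul_le_mul_of_nonneg_right (hball z hz) (norm_nonneg u)
    have := Convex.norm_image_sub_le_of_norm_fderiv_le
      (fun z _ => hφd z) bound (convex_ball xhat r) (Metric.mem_ball_self hr) hy
    have heq : φ y - φ xhat = gradient f y - Jc (B (y - xhat)) := by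
      simp only [hφdef, hgrad, ContinuousLinearMap.coe_comp', Function.comp_apply,
        map_sub]
      abel
    rw [heq] at this
    exact this
  have hw : ∀ e v : E, ⟪Jc (B e), v⟫ = B e v := fun e v => toDual_symm_apply
  have key : ∀ y, y ∈ Metric.ball xhat r → y ≠ xhat →
      gradient f y ≠ 0 ∧ 0 < F2 y (gradient f y) (gradient f y) ∧
      ‖y - (‖gradient f y‖^2 / F2 y (gradient f y) (gradient f y)) • gradient f y - xhat‖^2
        ≤ (1 - m/(4*M)) * ‖y - xhat‖^2 := by
    intro y hy hne
    have hH : ∀ u : E, |F2 y u u - B u u| ≤ δ*‖u‖^2 := by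
      intro u
      have h1 : |((F2 y - B) u) u| ≤ ‖(F2 y - B) u‖ * ‖u‖ := by
        rw [← Real.norm_eq_abs]; exact ((F2 y - B) u).le_opNorm u
      have h2 : ‖(F2 y - B) u‖ ≤ ‖F2 y - B‖ * ‖u‖ := (F2 y - B).le_opNorm u
      have h3 : ((F2 y - B) u) u = F2 y u u - B u u := by simp
      rw [h3] at h1
      have hδb := hball y hy
      calc |F2 y u u - B u u| ≤ ‖(F2 y - B) u‖ * ‖u‖ := h1
        _ ≤ (‖F2 y - B‖ * ‖u‖) * ‖u‖ := mul_le_mul_of_nonneg_right h2 (norm_nonneg u)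
        _ ≤ (δ * ‖u‖) * ‖u‖ := mul_le_mul_of_nonneg_right
              (mul_le_mul_of_nonneg_right hδb (norm_nonneg u)) (norm_nonneg u)
        _ = δ * ‖u‖^2 := by ring
    obtain ⟨h1, h2, h3⟩ := step_main m M δ hm hmM hδdef B (F2 y) hBsymm hBlow hBup hH
      (y - xhat) (gradient f y) (Jc (B (y - xhat))) (hw (y - xhat)) (hmvt y hy)
      (sub_ne_zero.mpr hne)
    refine ⟨h1, h2, ?_⟩
    have hvec : y - xhat - (‖gradient f y‖^2 / F2 y (gradient f y) (gradient f y)) • gradient f y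
        = y - (‖gradient f y‖^2 / F2 y (gradient f y) (gradient f y)) • gradient f y - xhat := by
      abel
    rw [← hvec]
    exact h3
  have hθ2pos : 0 < 1 - m/(4*M) := by
    have : m/(4*M) < 1 := by rw [div_lt_one (by positivity)]; linarith
    linarith
  have hθ2lt : 1 - m/(4*M) < 1 := by
    have : 0 < m/(4*M) := by positivity
    linarith
  set θ := Real.sqrt (1 - m/(4*M)) with hθdef
  have hθpos : 0 < θ := Real.sqrt_pos.mpr hθ2pos
  have hθlt : θ < 1 := by
    have h := Real.sqrt_lt_sqrt hθ2pos.le hθ2lt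
    simpa using h
  have hθle1 : θ ≤ 1 := hθlt.le
  have hcontract : ∀ (u v : E), ‖v‖^2 ≤ (1 - m/(4*M)) * ‖u‖^2 → ‖v‖ ≤ θ * ‖u‖ := by
    intro u v h
    have h1 : ‖v‖ = Real.sqrt (‖v‖^2) := (Real.sqrt_sq (norm_nonneg v)).symm
    rw [h1]
    calc Real.sqrt (‖v‖^2) ≤ Real.sqrt ((1 - m/(4*M)) * ‖u‖^2) := Real.sqrt_le_sqrt h
      _ = θ * ‖u‖ := by
          rw [Real.sqrt_mul hθ2pos.le, Real.sqrt_sq (norm_nonneg u)]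
  refine ⟨r, hr, 1, zero_le_one, θ, hθpos, hθlt, ?_⟩
  intro x₀ hx₀ x hx0 hrec
  have inv : ∀ k, ‖x k - xhat‖ ≤ θ^k * ‖x₀ - xhat‖ := by
    intro k
    induction k with
    | zero => rw [hx0]; simp
    | succ k ih =>
      have hballk : x k ∈ Metric.ball xhat r := by
        rw [Metric.mem_ball, dist_eq_norm]
        calc ‖x k - xhat‖ ≤ θ^k * ‖x₀ - xhat‖ := ih
          _ ≤ 1 * ‖x₀ - xhat‖ :=
              mul_le_mul_of_nonneg_right (pow_le_one₀ hθpos.le hθle1) (norm_nonneg _)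
          _ < r := by rwa [one_mul]
      by_cases hxeq : x k = xhat
      · have hg0 : gradient f (x k) = 0 := by rw [hxeq]; exact hgrad
        have hstep : x (k+1) = x k := by rw [hrec k, if_pos hg0]
        rw [hstep, hxeq]
        simp only [sub_self, norm_zero]
        positivity
      · obtain ⟨hg0, hQ, hcontr⟩ := key (x k) hballk hxeq
        have hstep : x (k+1) = x k - (‖gradient f (x k)‖^2 /
            F2 (x k) (gradient f (x k)) (gradient f (x k))) • gradient f (x k) := by
          rw [hrec k, if_neg hg0]
        rw [hstep]
        calc ‖x k - (‖gradient f (x k)‖^2 /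
              F2 (x k) (gradient f (x k)) (gradient f (x k))) • gradient f (x k) - xhat‖
            ≤ θ * ‖x k - xhat‖ := hcontract _ _ hcontr
          _ ≤ θ * (θ^k * ‖x₀ - xhat‖) := mul_le_mul_of_nonneg_left ih hθpos.le
          _ = θ^(k+1) * ‖x₀ - xhat‖ := by ring
  have hballall : ∀ k, ‖x k - xhat‖ < r := by
    intro k
    calc ‖x k - xhat‖ ≤ θ^k * ‖x₀ - xhat‖ := inv k
      _ ≤ 1 * ‖x₀ - xhat‖ :=
          mul_le_mul_of_nonneg_right (pow_le_one₀ hθpos.le hθle1) (norm_nonneg _)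
      _ < r := by rwa [one_mul]
  refine ⟨?_, hballall, ?_, ?_⟩
  · intro k hk
    have hne : x k ≠ xhat := fun h => hk (by rw [h]; exact hgrad)
    have hmem : x k ∈ Metric.ball xhat r := by
      rw [Metric.mem_ball, dist_eq_norm]; exact hballall k
    exact (key (x k) hmem hne).2.1
  · intro k
    rw [one_mul]
    exact inv k
  · rw [tendsto_iff_norm_sub_tendsto_zero]
    have h0 : Filter.Tendsto (fun k : ℕ => θ^k * ‖x₀ - xhat‖) Filter.atTop (nhds 0) := by
      have := (tendsto_pow_atTop_nhds_zero_of_lt_one hθpos.le hθlt).mul_const ‖x₀ - xhat‖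
      simpa using this
    exact squeeze_zero (fun k => norm_nonneg _) inv h0
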